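/- Let ((x1,x2), (ξ1,ξ2)) ∈ D. Set r = (2 − x2)√(ξ1² + ξ2²)/|ξ2|, s = √(r² − 1), x0 = x1 + ξ1(2 − x2)/ξ2 + s, σ = ξ2/(2 − x2), τ1 = σ(x1 − x0), τ2 = −σ(s + x1 − x0) (the parameters of the unique preimage of ((x1,x2),(ξ1,ξ2)) in 𝒞_1). Suppose ((y1,y2), (η1,η2)) ∈ ℝ² × ℝ² is such that ((s, x0, τ1, τ2), ((y1,y2),(η1,η2))) ∈ 𝒞_2. Then 2(x1 − x0) + s ≠ 0, and: y1 = s(x1 − x0)/(2(x1 − x0) + s) + x0, y2 = 2 − √(r² − (y1 − (x0 + s))²), and (η1,η2) = ((τ1 − τ2)/s)·((y1,y2) − c_2(s,x0)). (This is the explicit formula λ₁₂ for the nonlocal artefact produced by the composition 𝒞_2* ∘ 𝒞_1.) -/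

import Mathlib

/-- The canonical relation `𝒞_j ⊆ ℝ⁴ × (ℝ² × ℝ²)` of the circle transform `T_j`
(`j ∈ {1,2}`), for scanning region `X = {2 − r_m < x2 < 1}`:
all pairs `((s, x0, (−1)^{j−1}σ(x1−x0), −σ((−1)^{j−1}s + x1 − x0)),
((x1,x2), −σ((x1,x2) − c_j(s,x0))))` with `s > 0`, `σ ≠ 0` and
`(x1,x2) ∈ C_j(s,x0) ∩ X`, where `c_j(s,x0) = (x0 + (−1)^j s, 2)`. -/
def Crel (rm : ℝ) (j : ℕ) : Set ((ℝ × ℝ × ℝ × ℝ) × ((ℝ × ℝ) × (ℝ × ℝ))) :=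
  {p | ∃ s x0 σ x1 x2 : ℝ, 0 < s ∧ σ ≠ 0 ∧
    (x1 - (x0 + (-1 : ℝ) ^ j * s)) ^ 2 + (x2 - 2) ^ 2 = s ^ 2 + 1 ∧
    2 - rm < x2 ∧ x2 < 1 ∧
    p = ((s, x0, (-1 : ℝ) ^ (j - 1) * σ * (x1 - x0),
            -σ * ((-1 : ℝ) ^ (j - 1) * s + x1 - x0)),
         ((x1, x2), (-σ * (x1 - (x0 + (-1 : ℝ) ^ j * s)), -σ * (x2 - 2))))}

/-- The set `D = {((x1,x2),(ξ1,ξ2)) : 2 − r_m < x2 < 1, ξ2 ≠ 0}`. -/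
def Dset (rm : ℝ) : Set ((ℝ × ℝ) × (ℝ × ℝ)) :=
  {v | 2 - rm < v.1.2 ∧ v.1.2 < 1 ∧ v.2.2 ≠ 0}

/-- Explicit formula `λ₁₂` for the nonlocal artefact produced by `𝒞_2* ∘ 𝒞_1`.
Starting from `((x1,x2),(ξ1,ξ2)) ∈ D` with the parameters `(s,x0,τ1,τ2)` of its unique
preimage in `𝒞_1`, any `((y1,y2),(η1,η2))` with `((s,x0,τ1,τ2),((y1,y2),(η1,η2))) ∈ 𝒞_2`
satisfies `2(x1−x0)+s ≠ 0`, `y1 = s(x1−x0)/(2(x1−x0)+s)+x0`,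
`y2 = 2 − √(r² − (y1 − (x0+s))²)` and `(η1,η2) = ((τ1−τ2)/s)·((y1,y2) − c_2(s,x0))`. -/
theorem stmt9 (rm : ℝ) (hrm : 1 < rm)
    (x1 x2 ξ1 ξ2 : ℝ) (hD : (((x1, x2), (ξ1, ξ2)) : (ℝ × ℝ) × (ℝ × ℝ)) ∈ Dset rm)
    (r s x0 σ τ1 τ2 : ℝ)
    (hr : r = (2 - x2) * Real.sqrt (ξ1 ^ 2 + ξ2 ^ 2) / |ξ2|)
    (hs : s = Real.sqrt (r ^ 2 - 1))
    (hx0 : x0 = x1 + ξ1 * (2 - x2) / ξ2 + s)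
    (hσ : σ = ξ2 / (2 - x2))
    (hτ1 : τ1 = σ * (x1 - x0))
    (hτ2 : τ2 = -σ * (s + x1 - x0))
    (y1 y2 η1 η2 : ℝ)
    (h2 : (((s, x0, τ1, τ2), ((y1, y2), (η1, η2))) :
        (ℝ × ℝ × ℝ × ℝ) × ((ℝ × ℝ) × (ℝ × ℝ))) ∈ Crel rm 2) :
    2 * (x1 - x0) + s ≠ 0 ∧
    y1 = s * (x1 - x0) / (2 * (x1 - x0) + s) + x0 ∧
    y2 = 2 - Real.sqrt (r ^ 2 - (y1 - (x0 + s)) ^ 2) ∧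
    (η1, η2) = (((τ1 - τ2) / s * (y1 - (x0 + s)),
                 (τ1 - τ2) / s * (y2 - 2)) : ℝ × ℝ) := by
  obtain ⟨hx2l, hx2u, hξ2⟩ := hD
  simp only at hx2l hx2u hξ2
  obtain ⟨s', x0', σ', y1', y2', hs', hσ', hcirc, hy2l, hy2u, heq⟩ := h2
  norm_num [Prod.ext_iff] at heq
  obtain ⟨⟨hse, hx0e, ht1, ht2⟩, ⟨hy1e, hy2e⟩, hη1, hη2⟩ := heq
  subst hse hx0e hy1e hy2e
  have h2x : (0:ℝ) < 2 - x2 := by linarith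
  have hσ0 : σ ≠ 0 := by
    rw [hσ]; exact div_ne_zero hξ2 (ne_of_gt h2x)
  -- s^2 = r^2 - 1
  have hr1 : 1 ≤ r := by
    have h1 : |ξ2| ≤ Real.sqrt (ξ1 ^ 2 + ξ2 ^ 2) := by
      rw [← Real.sqrt_sq_eq_abs]
      exact Real.sqrt_le_sqrt (by nlinarith)
    have h2 : (0:ℝ) < |ξ2| := abs_pos.mpr hξ2
    rw [hr, le_div_iff₀ h2, one_mul]
    calc |ξ2| = 1 * |ξ2| := by ring
    _ ≤ (2 - x2) * Real.sqrt (ξ1 ^ 2 + ξ2 ^ 2) := by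
        apply mul_le_mul (by linarith) h1 (le_of_lt h2) (by linarith)
  have hs2 : s ^ 2 = r ^ 2 - 1 := by
    rw [hs, Real.sq_sqrt (by nlinarith)]
  -- τ1 - τ2 = σ(2(x1-x0)+s) = -σ' s  (using (-1)^(2-1) = -1)
  have hkey : σ * (2 * (x1 - x0) + s) = -σ' * s := by
    have : τ1 - τ2 = σ * (2 * (x1 - x0) + s) := by rw [hτ1, hτ2]; ring
    have h2' : τ1 - τ2 = -σ' * s := by rw [ht1, ht2]; ring
    linarith [this, h2']
  have hK : 2 * (x1 - x0) + s ≠ 0 := by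
    intro h
    have h0 : σ' * s = 0 := by linear_combination hkey - σ * h
    rcases mul_eq_zero.mp h0 with h' | h'
    · exact hσ' h'
    · exact (ne_of_gt hs') h'
  refine ⟨hK, ?_, ?_, ?_⟩
  · -- y1
    have h1 : σ * (x1 - x0) = -(σ' * (y1 - x0)) := by rw [← hτ1, ht1]
    have key2 : σ' * ((y1 - x0) * (2 * (x1 - x0) + s)) = σ' * (s * (x1 - x0)) := by
      linear_combination (2 * (x1 - x0) + s) * h1 - (x1 - x0) * hkey
    have key3 := mul_left_cancel₀ hσ' key2
    rw [div_add' _ _ _ hK, eq_div_iff hK]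
    linear_combination key3
  · -- y2
    norm_num at hcirc
    have h22 : (y2 - 2) ^ 2 = r ^ 2 - (y1 - (x0 + s)) ^ 2 := by nlinarith
    rw [← h22, Real.sqrt_sq_eq_abs, abs_of_nonpos (by linarith)]
    ring
  · -- η
    have hs0 : s ≠ 0 := ne_of_gt hs'
    have hdiv : (τ1 - τ2) / s = -σ' := by
      rw [ht1, ht2]; field_simp; ring
    norm_num at hη1 hη2
    rw [hη1, hη2, hdiv, Prod.mk.injEq]
    constructor <;> ring
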